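/- Let A and B be l×m real matrices with all entries positive. There is a bijection between the set of Nash equilibrium points (x*, y*) (pairs of probability vectors x* ∈ ℝ^l, y* ∈ ℝ^m satisfying the mutual best-response conditions for the bimatrix game (A,B)) and the set of pairs (u*, v*) of non-zero nonnegative vectors u* ∈ ℝ^l, v* ∈ ℝ^m satisfying uᵀB ≤ 1, Av ≤ 1, and the complementarity conditions: u*_i > 0 implies (Av*)_i = 1, and v*_j > 0 implies ((u*)ᵀB)_j = 1. -/
import Mathlib


open Matrix

def IsProbVec {n : ℕ} (x : Fin n → ℝ) : Prop := (∀ i, 0 ≤ x i) ∧ ∑ i, x i = 1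

def IsNashEq {l m : ℕ} (A B : Matrix (Fin l) (Fin m) ℝ) (x : Fin l → ℝ) (y : Fin m → ℝ) : Prop :=
  IsProbVec x ∧ IsProbVec y ∧
  (∀ x', IsProbVec x' → x' ⬝ᵥ (A *ᵥ y) ≤ x ⬝ᵥ (A *ᵥ y)) ∧
  (∀ y', IsProbVec y' → x ⬝ᵥ (B *ᵥ y') ≤ x ⬝ᵥ (B *ᵥ y))

namespace NashLCPAux

lemma single_prob {n : ℕ} (i : Fin n) : IsProbVec (Pi.single i (1:ℝ)) := by
  constructor
  · intro j; by_cases h : j = i <;> simp [Pi.single_apply, h]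
  · simp

lemma single_dot {n : ℕ} (i : Fin n) (w : Fin n → ℝ) : (Pi.single i (1:ℝ)) ⬝ᵥ w = w i := by
  simp [dotProduct, Pi.single_apply]

lemma opt_le {n : ℕ} {w x : Fin n → ℝ}
    (hopt : ∀ x', IsProbVec x' → x' ⬝ᵥ w ≤ x ⬝ᵥ w) (i : Fin n) : w i ≤ x ⬝ᵥ w := by
  simpa [single_dot] using hopt _ (single_prob i)

lemma opt_eq {n : ℕ} {w x : Fin n → ℝ} (hx : IsProbVec x)
    (hopt : ∀ x', IsProbVec x' → x' ⬝ᵥ w ≤ x ⬝ᵥ w) (i : Fin n) (hi : 0 < x i) :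
    w i = x ⬝ᵥ w := by
  set c := x ⬝ᵥ w with hc
  have hle := opt_le hopt
  have hsum : ∑ j, x j * (c - w j) = 0 := by
    simp [mul_sub, Finset.sum_sub_distrib, ← Finset.sum_mul, hx.2, hc, dotProduct]
  have hnn : ∀ j ∈ Finset.univ, 0 ≤ x j * (c - w j) := fun j _ =>
    mul_nonneg (hx.1 j) (sub_nonneg.2 (hle j))
  have := (Finset.sum_eq_zero_iff_of_nonneg hnn).1 hsum i (Finset.mem_univ i)
  rcases mul_eq_zero.1 this with h | h
  · exact absurd h (ne_of_gt hi)
  · linarith [sub_eq_zero.1 h]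

lemma opt_of {n : ℕ} {w x : Fin n → ℝ} (hx : IsProbVec x) (c : ℝ)
    (hle : ∀ i, w i ≤ c) (heq : ∀ i, 0 < x i → w i = c) :
    x ⬝ᵥ w = c ∧ ∀ x', IsProbVec x' → x' ⬝ᵥ w ≤ c := by
  constructor
  · have : ∀ i ∈ Finset.univ, x i * w i = x i * c := by
      intro i _
      rcases lt_or_eq_of_le (hx.1 i) with h | h
      · rw [heq i h]
      · rw [← h]; ring
    calc x ⬝ᵥ w = ∑ i, x i * c := Finset.sum_congr rfl this
    _ = c := by rw [← Finset.sum_mul, hx.2, one_mul]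
  · intro x' hx'
    calc x' ⬝ᵥ w ≤ ∑ i, x' i * c :=
          Finset.sum_le_sum (fun i _ => mul_le_mul_of_nonneg_left (hle i) (hx'.1 i))
    _ = c := by rw [← Finset.sum_mul, hx'.2, one_mul]

lemma prob_exists_pos {n : ℕ} {x : Fin n → ℝ} (hx : IsProbVec x) : ∃ i, 0 < x i := by
  by_contra h
  push_neg at h
  have h0 : ∀ i, x i = 0 := fun i => le_antisymm (h i) (hx.1 i)
  have : (1:ℝ) = 0 := by rw [← hx.2]; exact Finset.sum_eq_zero (fun i _ => h0 i)
  norm_num at this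

lemma dot_pos {l m : ℕ} (A : Matrix (Fin l) (Fin m) ℝ) (hA : ∀ i j, 0 < A i j)
    {x : Fin l → ℝ} {y : Fin m → ℝ} (hx : IsProbVec x) (hy : IsProbVec y) :
    0 < x ⬝ᵥ (A *ᵥ y) := by
  simp only [mulVec, dotProduct]
  obtain ⟨i0, hi0⟩ := prob_exists_pos hx
  obtain ⟨j0, hj0⟩ := prob_exists_pos hy
  have hin : ∀ i, 0 ≤ ∑ j, A i j * y j := fun i =>
    Finset.sum_nonneg (fun j _ => mul_nonneg (hA i j).le (hy.1 j))
  have hin0 : 0 < ∑ j, A i0 j * y j :=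
    Finset.sum_pos' (fun j _ => mul_nonneg (hA i0 j).le (hy.1 j))
      ⟨j0, Finset.mem_univ j0, mul_pos (hA i0 j0) hj0⟩
  exact Finset.sum_pos' (fun i _ => mul_nonneg (hx.1 i) (hin i))
    ⟨i0, Finset.mem_univ i0, mul_pos hi0 hin0⟩

lemma sum_pos_of_ne_zero {n : ℕ} {u : Fin n → ℝ} (hu : ∀ i, 0 ≤ u i) (hne : u ≠ 0) :
    0 < ∑ i, u i := by
  obtain ⟨i, hi⟩ : ∃ i, u i ≠ 0 := by
    by_contra hc; push_neg at hc; exact hne (funext hc)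
  exact Finset.sum_pos' (fun j _ => hu j)
    ⟨i, Finset.mem_univ i, lt_of_le_of_ne (hu i) (Ne.symm hi)⟩

def LCPcond {l m : ℕ} (A B : Matrix (Fin l) (Fin m) ℝ) (p : (Fin l → ℝ) × (Fin m → ℝ)) : Prop :=
  p.1 ≠ 0 ∧ p.2 ≠ 0 ∧ (∀ i, 0 ≤ p.1 i) ∧ (∀ j, 0 ≤ p.2 j) ∧
  (∀ j, (p.1 ᵥ* B) j ≤ 1) ∧ (∀ i, (A *ᵥ p.2) i ≤ 1) ∧
  (∀ i, 0 < p.1 i → (A *ᵥ p.2) i = 1) ∧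
  (∀ j, 0 < p.2 j → (p.1 ᵥ* B) j = 1)

variable {l m : ℕ} {A B : Matrix (Fin l) (Fin m) ℝ}

lemma vecMul_smul' (c : ℝ) (x : Fin l → ℝ) : (c • x) ᵥ* B = c • (x ᵥ* B) := by
  funext j
  simp [vecMul, smul_dotProduct]

lemma nash_to_lcp (hA : ∀ i j, 0 < A i j) (hB : ∀ i j, 0 < B i j)
    {x : Fin l → ℝ} {y : Fin m → ℝ} (h : IsNashEq A B x y) :
    LCPcond A B ((x ⬝ᵥ (B *ᵥ y))⁻¹ • x, (x ⬝ᵥ (A *ᵥ y))⁻¹ • y) := by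
  obtain ⟨hx, hy, hopt1, hopt2⟩ := h
  set α := x ⬝ᵥ (A *ᵥ y) with hα
  set β := x ⬝ᵥ (B *ᵥ y) with hβ
  have hαpos : 0 < α := dot_pos A hA hx hy
  have hβpos : 0 < β := dot_pos B hB hx hy
  have hyw : y ⬝ᵥ (x ᵥ* B) = β := by rw [hβ, dotProduct_mulVec, dotProduct_comm]
  have hopt2' : ∀ y', IsProbVec y' → y' ⬝ᵥ (x ᵥ* B) ≤ y ⬝ᵥ (x ᵥ* B) := by
    intro y' hy'
    have := hopt2 y' hy'
    rw [dotProduct_mulVec, dotProduct_comm] at this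
    rw [hyw]
    exact this
  have hle1 : ∀ i, (A *ᵥ y) i ≤ α := opt_le hopt1
  have heq1 : ∀ i, 0 < x i → (A *ᵥ y) i = α := opt_eq hx hopt1
  have hle2 : ∀ j, (x ᵥ* B) j ≤ β := by
    intro j; have := opt_le hopt2' j; rwa [hyw] at this
  have heq2 : ∀ j, 0 < y j → (x ᵥ* B) j = β := by
    intro j hj; have := opt_eq hy hopt2' j hj; rwa [hyw] at this
  have hAv : A *ᵥ (α⁻¹ • y) = α⁻¹ • (A *ᵥ y) := mulVec_smul A α⁻¹ y
  have hBu : (β⁻¹ • x) ᵥ* B = β⁻¹ • (x ᵥ* B) := vecMul_smul' β⁻¹ x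
  refine ⟨?_, ?_, ?_, ?_, ?_, ?_, ?_, ?_⟩
  · obtain ⟨i, hi⟩ := prob_exists_pos hx
    intro hz
    have : β⁻¹ * x i = 0 := congrFun hz i
    rcases mul_eq_zero.1 this with h | h
    · exact (inv_ne_zero hβpos.ne') h
    · exact hi.ne' h
  · obtain ⟨j, hj⟩ := prob_exists_pos hy
    intro hz
    have : α⁻¹ * y j = 0 := congrFun hz j
    rcases mul_eq_zero.1 this with h | h
    · exact (inv_ne_zero hαpos.ne') h
    · exact hj.ne' h
  · intro i; exact mul_nonneg (inv_nonneg.2 hβpos.le) (hx.1 i)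
  · intro j; exact mul_nonneg (inv_nonneg.2 hαpos.le) (hy.1 j)
  · intro j
    rw [hBu]
    simp only [Pi.smul_apply, smul_eq_mul]
    calc β⁻¹ * (x ᵥ* B) j ≤ β⁻¹ * β :=
          mul_le_mul_of_nonneg_left (hle2 j) (inv_nonneg.2 hβpos.le)
    _ = 1 := inv_mul_cancel₀ hβpos.ne'
  · intro i
    rw [hAv]
    simp only [Pi.smul_apply, smul_eq_mul]
    calc α⁻¹ * (A *ᵥ y) i ≤ α⁻¹ * α :=
          mul_le_mul_of_nonneg_left (hle1 i) (inv_nonneg.2 hαpos.le)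
    _ = 1 := inv_mul_cancel₀ hαpos.ne'
  · intro i hi
    have hxi : 0 < x i := by
      by_contra hc
      push_neg at hc
      have : x i = 0 := le_antisymm hc (hx.1 i)
      simp only [Pi.smul_apply, smul_eq_mul, this, mul_zero] at hi
      exact lt_irrefl 0 hi
    rw [hAv]
    simp only [Pi.smul_apply, smul_eq_mul, heq1 i hxi]
    exact inv_mul_cancel₀ hαpos.ne'
  · intro j hj
    have hyj : 0 < y j := by
      by_contra hc
      push_neg at hc
      have : y j = 0 := le_antisymm hc (hy.1 j)
      simp only [Pi.smul_apply, smul_eq_mul, this, mul_zero] at hj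
      exact lt_irrefl 0 hj
    rw [hBu]
    simp only [Pi.smul_apply, smul_eq_mul, heq2 j hyj]
    exact inv_mul_cancel₀ hβpos.ne'

lemma normalize_prob {n : ℕ} {u : Fin n → ℝ} (hu : ∀ i, 0 ≤ u i) (hne : u ≠ 0) :
    IsProbVec ((∑ i, u i)⁻¹ • u) := by
  have hs : 0 < ∑ i, u i := sum_pos_of_ne_zero hu hne
  constructor
  · intro i; exact mul_nonneg (inv_nonneg.2 hs.le) (hu i)
  · simp only [Pi.smul_apply, smul_eq_mul, ← Finset.mul_sum]
    exact inv_mul_cancel₀ hs.ne'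

lemma lcp_to_nash {p : (Fin l → ℝ) × (Fin m → ℝ)} (hp : LCPcond A B p) :
    IsNashEq A B ((∑ i, p.1 i)⁻¹ • p.1) ((∑ j, p.2 j)⁻¹ • p.2) ∧
    ((∑ i, p.1 i)⁻¹ • p.1) ⬝ᵥ (A *ᵥ ((∑ j, p.2 j)⁻¹ • p.2)) = (∑ j, p.2 j)⁻¹ ∧
    ((∑ i, p.1 i)⁻¹ • p.1) ⬝ᵥ (B *ᵥ ((∑ j, p.2 j)⁻¹ • p.2)) = (∑ i, p.1 i)⁻¹ := by
  obtain ⟨hu0, hv0, hu, hv, hBle, hAle, hcu, hcv⟩ := hp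
  set u := p.1
  set v := p.2
  have hs : 0 < ∑ i, u i := sum_pos_of_ne_zero hu hu0
  have ht : 0 < ∑ j, v j := sum_pos_of_ne_zero hv hv0
  set s := ∑ i, u i with hsdef
  set t := ∑ j, v j with htdef
  set x := s⁻¹ • u with hxdef
  set y := t⁻¹ • v with hydef
  have hxprob : IsProbVec x := normalize_prob hu hu0
  have hyprob : IsProbVec y := normalize_prob hv hv0
  have hAy : A *ᵥ y = t⁻¹ • (A *ᵥ v) := mulVec_smul A t⁻¹ v
  have hxB : x ᵥ* B = s⁻¹ • (u ᵥ* B) := vecMul_smul' s⁻¹ u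
  have hle1 : ∀ i, (A *ᵥ y) i ≤ t⁻¹ := by
    intro i
    rw [hAy]
    simp only [Pi.smul_apply, smul_eq_mul]
    calc t⁻¹ * (A *ᵥ v) i ≤ t⁻¹ * 1 :=
          mul_le_mul_of_nonneg_left (hAle i) (inv_nonneg.2 ht.le)
    _ = t⁻¹ := mul_one _
  have heq1 : ∀ i, 0 < x i → (A *ᵥ y) i = t⁻¹ := by
    intro i hi
    have hui : 0 < u i := by
      by_contra hc
      push_neg at hc
      have : u i = 0 := le_antisymm hc (hu i)
      simp only [hxdef, Pi.smul_apply, smul_eq_mul, this, mul_zero] at hi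
      exact lt_irrefl 0 hi
    rw [hAy]
    simp only [Pi.smul_apply, smul_eq_mul, hcu i hui, mul_one]
  obtain ⟨hval1, hopt1⟩ := opt_of hxprob t⁻¹ hle1 heq1
  have hle2 : ∀ j, (x ᵥ* B) j ≤ s⁻¹ := by
    intro j
    rw [hxB]
    simp only [Pi.smul_apply, smul_eq_mul]
    calc s⁻¹ * (u ᵥ* B) j ≤ s⁻¹ * 1 :=
          mul_le_mul_of_nonneg_left (hBle j) (inv_nonneg.2 hs.le)
    _ = s⁻¹ := mul_one _
  have heq2 : ∀ j, 0 < y j → (x ᵥ* B) j = s⁻¹ := by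
    intro j hj
    have hvj : 0 < v j := by
      by_contra hc
      push_neg at hc
      have : v j = 0 := le_antisymm hc (hv j)
      simp only [hydef, Pi.smul_apply, smul_eq_mul, this, mul_zero] at hj
      exact lt_irrefl 0 hj
    rw [hxB]
    simp only [Pi.smul_apply, smul_eq_mul, hcv j hvj, mul_one]
  obtain ⟨hval2, hopt2⟩ := opt_of hyprob s⁻¹ hle2 heq2
  have hdot2 : ∀ y' : Fin m → ℝ, x ⬝ᵥ (B *ᵥ y') = y' ⬝ᵥ (x ᵥ* B) := by
    intro y'
    rw [dotProduct_mulVec, dotProduct_comm]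
  have hxBy : x ⬝ᵥ (B *ᵥ y) = s⁻¹ := by rw [hdot2]; exact hval2
  refine ⟨⟨hxprob, hyprob, ?_, ?_⟩, hval1, hxBy⟩
  · intro x' hx'
    rw [hval1]
    exact hopt1 x' hx'
  · intro y' hy'
    rw [hxBy, hdot2]
    exact hopt2 y' hy'

end NashLCPAux

open NashLCPAux

theorem bimatrix_nash_lcp_bijection {l m : ℕ} (A B : Matrix (Fin l) (Fin m) ℝ)
    (hA : ∀ i j, 0 < A i j) (hB : ∀ i j, 0 < B i j) :
    Nonempty ({p : (Fin l → ℝ) × (Fin m → ℝ) // IsNashEq A B p.1 p.2} ≃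
      {p : (Fin l → ℝ) × (Fin m → ℝ) //
        p.1 ≠ 0 ∧ p.2 ≠ 0 ∧ (∀ i, 0 ≤ p.1 i) ∧ (∀ j, 0 ≤ p.2 j) ∧
        (∀ j, (p.1 ᵥ* B) j ≤ 1) ∧ (∀ i, (A *ᵥ p.2) i ≤ 1) ∧
        (∀ i, 0 < p.1 i → (A *ᵥ p.2) i = 1) ∧
        (∀ j, 0 < p.2 j → (p.1 ᵥ* B) j = 1)}) := by
  refine ⟨⟨
    fun p => ⟨((p.1.1 ⬝ᵥ (B *ᵥ p.1.2))⁻¹ • p.1.1, (p.1.1 ⬝ᵥ (A *ᵥ p.1.2))⁻¹ • p.1.2),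
      nash_to_lcp hA hB p.2⟩,
    fun p => ⟨((∑ i, p.1.1 i)⁻¹ • p.1.1, (∑ j, p.1.2 j)⁻¹ • p.1.2),
      (lcp_to_nash p.2).1⟩, ?_, ?_⟩⟩
  · rintro ⟨⟨x, y⟩, h⟩
    have hx := h.1
    have hy := h.2.1
    have hαpos : 0 < x ⬝ᵥ (A *ᵥ y) := dot_pos A hA hx hy
    have hβpos : 0 < x ⬝ᵥ (B *ᵥ y) := dot_pos B hB hx hy
    apply Subtype.ext
    simp only
    have hsum1 : ∑ i, ((x ⬝ᵥ (B *ᵥ y))⁻¹ • x) i = (x ⬝ᵥ (B *ᵥ y))⁻¹ := by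
      simp only [Pi.smul_apply, smul_eq_mul, ← Finset.mul_sum, hx.2, mul_one]
    have hsum2 : ∑ j, ((x ⬝ᵥ (A *ᵥ y))⁻¹ • y) j = (x ⬝ᵥ (A *ᵥ y))⁻¹ := by
      simp only [Pi.smul_apply, smul_eq_mul, ← Finset.mul_sum, hy.2, mul_one]
    rw [hsum1, hsum2, inv_inv, inv_inv, smul_smul, smul_smul,
      mul_inv_cancel₀ hβpos.ne', mul_inv_cancel₀ hαpos.ne', one_smul, one_smul]
  · rintro ⟨⟨u, v⟩, h⟩
    obtain ⟨hnash, hval1, hval2⟩ := lcp_to_nash (p := (u, v)) h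
    have hs : 0 < ∑ i, u i := sum_pos_of_ne_zero h.2.2.1 h.1
    have ht : 0 < ∑ j, v j := sum_pos_of_ne_zero h.2.2.2.1 h.2.1
    apply Subtype.ext
    simp only
    rw [hval1, hval2, inv_inv, inv_inv, smul_smul, smul_smul,
      mul_inv_cancel₀ hs.ne', mul_inv_cancel₀ ht.ne', one_smul, one_smul]
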